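/- arXiv:2303.04359 — 2 statements merged into one kernel-verified Lean document; each statement's English description precedes it below -/
import Mathlib

section
/- The Reuleaux triangle T — the intersection of the three closed unit disks centered at the three vertices of an equilateral triangle of side length 1 — is a convex body of constant width 1, and its area (two-dimensional Lebesgue measure) equals (π − √3)/2. -/
open Real MeasureTheory ENNReal

/-- The direction vector `u θ = (cos θ, sin θ)` in the Euclidean plane. -/
noncomputable def u (θ : ℝ) : EuclideanSpace ℝ (Fin 2) := !₂[Real.cos θ, Real.sin θ]

/-- `h` is the support function of `K`: for every direction `θ`,
`h θ` is the maximum of `x · u θ` over `x ∈ K`. -/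
def IsSupportFn (K : Set (EuclideanSpace ℝ (Fin 2))) (h : ℝ → ℝ) : Prop :=
  ∀ θ : ℝ, IsGreatest ((fun x => (inner ℝ x (u θ) : ℝ)) '' K) (h θ)

/-- The Reuleaux triangle: the intersection of the three closed unit disks centered at
the vertices `(1/2, 1/(2√3))`, `(−1/2, 1/(2√3))`, `(0, −1/√3)` of an equilateral triangle
of side length 1. -/
noncomputable def ReuleauxTriangle : Set (EuclideanSpace ℝ (Fin 2)) :=
  Metric.closedBall (!₂[1/2, 1/(2*Real.sqrt 3)] : EuclideanSpace ℝ (Fin 2)) 1 ∩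
  Metric.closedBall (!₂[-(1/2), 1/(2*Real.sqrt 3)] : EuclideanSpace ℝ (Fin 2)) 1 ∩
  Metric.closedBall (!₂[0, -(1/Real.sqrt 3)] : EuclideanSpace ℝ (Fin 2)) 1

set_option maxHeartbeats 1000000

noncomputable def aR : ℝ := 1/(2*Real.sqrt 3)

lemma sqrt3_pos : (0:ℝ) < Real.sqrt 3 := Real.sqrt_pos.2 (by norm_num)

lemma haR : 12*aR^2 = 1 := by
  have h3 : Real.sqrt 3 ^ 2 = 3 := Real.sq_sqrt (by norm_num)
  have := sqrt3_pos
  rw [aR]; field_simp; nlinarith [h3]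

lemma haR0 : 0 < aR := by rw [aR]; positivity

section RealLemmas
variable {a p q c s : ℝ}



-- Cauchy–Schwarz helper: from ball constraint, inner product ≤ 1
lemma cs1 (ha : 12*a^2 = 1) (hx : (p+1/2)^2+(q-a)^2 ≤ 1) : p ≤ 1/2 := by
  nlinarith [sq_nonneg (q-a), sq_nonneg (p - 1/2)]

lemma cs1' (ha : 12*a^2 = 1) (hx : (p-1/2)^2+(q-a)^2 ≤ 1) : -(1/2) ≤ p := by
  nlinarith [sq_nonneg (q-a), sq_nonneg (p + 1/2)]

-- ⟨x−v1, v1−v3⟩ ≤ 0 from ball at v3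
lemma cs2 (ha : 12*a^2 = 1) (hx : p^2+(q+2*a)^2 ≤ 1) :
    (p-1/2)/2 + 3*a*(q-a) ≤ 0 := by
  have hmul := mul_le_mul_of_nonneg_right hx (by positivity : (0:ℝ) ≤ 1/4 + 9*a^2)
  nlinarith [sq_nonneg (3*a*p - (q+2*a)/2), sq_nonneg (p/2 + 3*a*(q+2*a) - 1)]

-- ⟨x−v2, v2−v3⟩ ≤ 0 from ball at v3
lemma cs3 (ha : 12*a^2 = 1) (hx : p^2+(q+2*a)^2 ≤ 1) :
    -(p+1/2)/2 + 3*a*(q-a) ≤ 0 := by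
  have hmul := mul_le_mul_of_nonneg_right hx (by positivity : (0:ℝ) ≤ 1/4 + 9*a^2)
  nlinarith [sq_nonneg (3*a*p + (q+2*a)/2), sq_nonneg (-p/2 + 3*a*(q+2*a) - 1)]

-- ⟨x−v3, v3−v1⟩ ≤ 0 from ball at v1
lemma cs4 (ha : 12*a^2 = 1) (hx : (p-1/2)^2+(q-a)^2 ≤ 1) :
    -p/2 - 3*a*(q+2*a) ≤ 0 := by
  have hmul := mul_le_mul_of_nonneg_right hx (by positivity : (0:ℝ) ≤ 1/4 + 9*a^2)
  nlinarith [sq_nonneg (3*a*(p-1/2) - (q-a)/2), sq_nonneg ((p-1/2)/2 + 3*a*(q-a) + 1)]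

-- ⟨x−v3, v3−v2⟩ ≤ 0 from ball at v2
lemma cs5 (ha : 12*a^2 = 1) (hx : (p+1/2)^2+(q-a)^2 ≤ 1) :
    p/2 - 3*a*(q+2*a) ≤ 0 := by
  have hmul := mul_le_mul_of_nonneg_right hx (by positivity : (0:ℝ) ≤ 1/4 + 9*a^2)
  nlinarith [sq_nonneg (3*a*(p+1/2) + (q-a)/2), sq_nonneg ((p+1/2)/2 - 3*a*(q-a) - 1)]

-- unit "g ≤ 1" bounds
lemma gb1 (hu : c^2+s^2 = 1) : c ≤ 1 := by nlinarith [sq_nonneg s, sq_nonneg (c-1)]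
lemma gb2 (ha : 12*a^2 = 1) (hu : c^2+s^2 = 1) : c/2 + 3*a*s ≤ 1 := by
  have hmul := mul_le_mul_of_nonneg_right hu.le (by positivity : (0:ℝ) ≤ 1/4 + 9*a^2)
  nlinarith [sq_nonneg (3*a*c - s/2), sq_nonneg (c/2 + 3*a*s - 1)]
lemma gb3 (ha : 12*a^2 = 1) (hu : c^2+s^2 = 1) : -c/2 + 3*a*s ≤ 1 := by
  have hmul := mul_le_mul_of_nonneg_right hu.le (by positivity : (0:ℝ) ≤ 1/4 + 9*a^2)
  nlinarith [sq_nonneg (3*a*c + s/2), sq_nonneg (-c/2 + 3*a*s - 1)]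

-- cone lemma j = 1
lemma cone1 (ha : 12*a^2 = 1) (ha0 : 0 < a)
    (hx2 : (p+1/2)^2+(q-a)^2 ≤ 1) (hx3 : p^2+(q+2*a)^2 ≤ 1)
    (hu : c^2+s^2 = 1) (g1 : 1/2 ≤ c) (g2 : 1/2 ≤ c/2 + 3*a*s) :
    p*c + q*s ≤ c/2 + a*s := by
  have A1 := cs1 ha hx2
  have B1 := cs2 ha hx3
  have hg2 := gb2 ha hu
  have hg1 := gb1 hu
  have hα : 0 ≤ c - 2*a*s := by linarith
  have hβ : 0 ≤ 4*a*s := by linarith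
  have key : p*c + q*s - (c/2 + a*s)
      = (c-2*a*s)*(p-1/2) + (4*a*s)*((p-1/2)/2 + 3*a*(q-a)) := by
    linear_combination (a*s - q*s) * ha
  nlinarith [mul_nonneg hα (by linarith : (0:ℝ) ≤ 1/2 - p),
     mul_nonneg hβ (by linarith : (0:ℝ) ≤ -((p-1/2)/2 + 3*a*(q-a)))]

-- cone lemma j = 2
lemma cone2 (ha : 12*a^2 = 1) (ha0 : 0 < a)
    (hx1 : (p-1/2)^2+(q-a)^2 ≤ 1) (hx3 : p^2+(q+2*a)^2 ≤ 1)
    (hu : c^2+s^2 = 1) (g1 : 1/2 ≤ -c) (g2 : 1/2 ≤ -c/2 + 3*a*s) :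
    p*c + q*s ≤ -c/2 + a*s := by
  have A1 := cs1' ha hx1
  have B1 := cs3 ha hx3
  have hg2 := gb3 ha hu
  have hg1 : -c ≤ 1 := by nlinarith [sq_nonneg s, sq_nonneg (c+1)]
  have hα : 0 ≤ -c - 2*a*s := by linarith
  have hβ : 0 ≤ 4*a*s := by linarith
  have key : p*c + q*s - (-c/2 + a*s)
      = (-c-2*a*s)*(-(p+1/2)) + (4*a*s)*(-(p+1/2)/2 + 3*a*(q-a)) := by
    linear_combination (a*s - q*s) * ha
  nlinarith [mul_nonneg hα (by linarith : (0:ℝ) ≤ p + 1/2),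
     mul_nonneg hβ (by linarith : (0:ℝ) ≤ -(-(p+1/2)/2 + 3*a*(q-a)))]

-- cone lemma j = 3
lemma cone3 (ha : 12*a^2 = 1) (ha0 : 0 < a)
    (hx1 : (p-1/2)^2+(q-a)^2 ≤ 1) (hx2 : (p+1/2)^2+(q-a)^2 ≤ 1)
    (hu : c^2+s^2 = 1) (g1 : 1/2 ≤ -c/2 - 3*a*s) (g2 : 1/2 ≤ c/2 - 3*a*s) :
    p*c + q*s ≤ -2*a*s := by
  have A1 := cs4 ha hx1
  have B1 := cs5 ha hx2
  have hg1 : -c/2 - 3*a*s ≤ 1 := by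
    have hmul := mul_le_mul_of_nonneg_right hu.le (by positivity : (0:ℝ) ≤ 1/4 + 9*a^2)
    nlinarith [sq_nonneg (3*a*c - s/2), sq_nonneg (-c/2 - 3*a*s - 1)]
  have hg2' : c/2 - 3*a*s ≤ 1 := by
    have hmul := mul_le_mul_of_nonneg_right hu.le (by positivity : (0:ℝ) ≤ 1/4 + 9*a^2)
    nlinarith [sq_nonneg (3*a*c + s/2), sq_nonneg (c/2 - 3*a*s - 1)]
  have hα : 0 ≤ -c - 2*a*s := by linarith
  have hβ : 0 ≤ c - 2*a*s := by linarith
  have key : p*c + q*s - (-2*a*s)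
      = (-c-2*a*s)*(-p/2 - 3*a*(q+2*a)) + (c-2*a*s)*(p/2 - 3*a*(q+2*a)) := by
    linear_combination (-(q*s) - 2*a*s) * ha
  nlinarith [mul_nonneg hα (by linarith : (0:ℝ) ≤ -(-p/2 - 3*a*(q+2*a))),
     mul_nonneg hβ (by linarith : (0:ℝ) ≤ -(p/2 - 3*a*(q+2*a)))]


-- lower bounds: ⟨x,u⟩ ≥ ⟨v_j,u⟩ − 1
lemma low1 (hx : (p-1/2)^2+(q-a)^2 ≤ 1) (hu : c^2+s^2 = 1) :
    c/2 + a*s - 1 ≤ p*c + q*s := by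
  nlinarith [sq_nonneg ((1/2-p)*s - (a-q)*c), sq_nonneg ((1/2-p)*c + (a-q)*s - 1),
    mul_le_mul_of_nonneg_right hx (by positivity : (0:ℝ) ≤ c^2+s^2)]
lemma low2 (hx : (p+1/2)^2+(q-a)^2 ≤ 1) (hu : c^2+s^2 = 1) :
    -c/2 + a*s - 1 ≤ p*c + q*s := by
  nlinarith [sq_nonneg ((-1/2-p)*s - (a-q)*c), sq_nonneg ((-1/2-p)*c + (a-q)*s - 1),
    mul_le_mul_of_nonneg_right hx (by positivity : (0:ℝ) ≤ c^2+s^2)]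
lemma low3 (hx : p^2+(q+2*a)^2 ≤ 1) (hu : c^2+s^2 = 1) :
    -2*a*s - 1 ≤ p*c + q*s := by
  nlinarith [sq_nonneg (p*s - (q+2*a)*c), sq_nonneg (p*c + (q+2*a)*s + 1),
    mul_le_mul_of_nonneg_right hx (by positivity : (0:ℝ) ≤ c^2+s^2)]

-- membership of v_j − u in the three balls (coordinatewise)
lemma mem1 (ha : 12*a^2 = 1) (hu : c^2+s^2 = 1) (g1 : 1/2 ≤ c) (g2 : 1/2 ≤ c/2 + 3*a*s) :
    (1/2-c-1/2)^2 + (a-s-a)^2 ≤ 1 ∧ (1/2-c+1/2)^2 + (a-s-a)^2 ≤ 1 ∧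
    (1/2-c)^2 + (a-s+2*a)^2 ≤ 1 := by
  refine ⟨by nlinarith, by nlinarith, by nlinarith⟩
lemma mem2 (ha : 12*a^2 = 1) (hu : c^2+s^2 = 1) (g1 : 1/2 ≤ -c) (g2 : 1/2 ≤ -c/2 + 3*a*s) :
    (-1/2-c-1/2)^2 + (a-s-a)^2 ≤ 1 ∧ (-1/2-c+1/2)^2 + (a-s-a)^2 ≤ 1 ∧
    (-1/2-c)^2 + (a-s+2*a)^2 ≤ 1 := by
  refine ⟨by nlinarith, by nlinarith, by nlinarith⟩
lemma mem3 (ha : 12*a^2 = 1) (hu : c^2+s^2 = 1) (g1 : 1/2 ≤ -c/2 - 3*a*s) (g2 : 1/2 ≤ c/2 - 3*a*s) :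
    (-c-1/2)^2 + (-2*a-s-a)^2 ≤ 1 ∧ (-c+1/2)^2 + (-2*a-s-a)^2 ≤ 1 ∧
    (-c)^2 + (-2*a-s+2*a)^2 ≤ 1 := by
  refine ⟨by nlinarith, by nlinarith, by nlinarith⟩

-- covering lemma
lemma covering (ha : 12*a^2 = 1) (ha0 : 0 < a) (hu : c^2+s^2 = 1) :
    (1/2 ≤ c ∧ 1/2 ≤ c/2 + 3*a*s) ∨ (1/2 ≤ -c ∧ 1/2 ≤ -c/2 + 3*a*s) ∨
    (1/2 ≤ -c/2 - 3*a*s ∧ 1/2 ≤ c/2 - 3*a*s) ∨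
    (1/2 ≤ -c ∧ 1/2 ≤ -c/2 - 3*a*s) ∨ (1/2 ≤ c ∧ 1/2 ≤ c/2 - 3*a*s) ∨
    (1/2 ≤ c/2 + 3*a*s ∧ 1/2 ≤ -c/2 + 3*a*s) := by
  have h6a : 1 ≤ 6*a := by nlinarith
  have h3s : (6*a*s)^2 = 3 - 3*c^2 := by linear_combination 3*s^2*ha + 3*hu
  rcases le_or_gt 0 s with hs | hs
  · have hs1 : s ≤ 1 := by nlinarith [sq_nonneg (s-1)]
    have hss : s^2 ≤ s := by nlinarith
    rcases le_or_gt (1/2) c with h | h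
    · have hc1 : c ≤ 1 := by nlinarith [sq_nonneg (c-1)]
      exact Or.inl ⟨h, by nlinarith [mul_nonneg (by linarith : (0:ℝ) ≤ 6*a - 1) hs]⟩
    · rcases le_or_gt c (-(1/2)) with h2 | h2
      · have hc1 : -c ≤ 1 := by nlinarith [sq_nonneg (c+1)]
        refine Or.inr (Or.inl ⟨by linarith, ?_⟩)
        nlinarith [mul_nonneg (by linarith : (0:ℝ) ≤ 6*a - 1) hs]
      · have has : 0 ≤ a*s := mul_nonneg ha0.le hs
        refine Or.inr (Or.inr (Or.inr (Or.inr (Or.inr ⟨?_, ?_⟩))))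
        · nlinarith [h3s, (by nlinarith : (0:ℝ) < 6*a*s + 1 - c)]
        · nlinarith [h3s, (by nlinarith : (0:ℝ) < 6*a*s + 1 + c)]
  · have hs1 : -s ≤ 1 := by nlinarith [sq_nonneg (s+1)]
    have hss : s^2 ≤ -s := by nlinarith
    rcases le_or_gt (1/2) c with h | h
    · have hc1 : c ≤ 1 := by nlinarith [sq_nonneg (c-1)]
      refine Or.inr (Or.inr (Or.inr (Or.inr (Or.inl ⟨h, ?_⟩))))
      nlinarith [mul_nonneg (by linarith : (0:ℝ) ≤ 6*a - 1) (by linarith : (0:ℝ) ≤ -s)]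
    · rcases le_or_gt c (-(1/2)) with h2 | h2
      · have hc1 : -c ≤ 1 := by nlinarith [sq_nonneg (c+1)]
        refine Or.inr (Or.inr (Or.inr (Or.inl ⟨by linarith, ?_⟩)))
        nlinarith [mul_nonneg (by linarith : (0:ℝ) ≤ 6*a - 1) (by linarith : (0:ℝ) ≤ -s)]
      · have has : 0 ≤ a*(-s) := mul_nonneg ha0.le (by linarith)
        refine Or.inr (Or.inr (Or.inl ⟨?_, ?_⟩))
        · nlinarith [h3s, (by nlinarith : (0:ℝ) < -(6*a*s) + 1 - c)]
        · nlinarith [h3s, (by nlinarith : (0:ℝ) < -(6*a*s) + 1 + c)]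

end RealLemmas

local notation "E2" => EuclideanSpace ℝ (Fin 2)

lemma mem_ball_iff (x c : E2) :
    x ∈ Metric.closedBall c 1 ↔ (x 0 - c 0)^2 + (x 1 - c 1)^2 ≤ 1 := by
  rw [Metric.mem_closedBall, EuclideanSpace.dist_eq, Fin.sum_univ_two]
  rw [show (1:ℝ) = Real.sqrt 1 by simp]
  rw [Real.sqrt_le_sqrt_iff (by positivity)]
  simp [Real.dist_eq, sq_abs]

lemma memT (x : E2) : x ∈ ReuleauxTriangle ↔
    ((x 0 - 1/2)^2 + (x 1 - aR)^2 ≤ 1 ∧ (x 0 + 1/2)^2 + (x 1 - aR)^2 ≤ 1 ∧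
      (x 0)^2 + (x 1 + 2*aR)^2 ≤ 1) := by
  have h2a : (1:ℝ)/Real.sqrt 3 = 2*aR := by
    rw [aR]; field_simp
  rw [ReuleauxTriangle, Set.mem_inter_iff, Set.mem_inter_iff,
    mem_ball_iff, mem_ball_iff, mem_ball_iff]
  simp only [PiLp.toLp_apply, Matrix.cons_val_zero, Matrix.cons_val_one, Matrix.head_cons, sub_zero,
    sub_neg_eq_add]
  rw [and_assoc, h2a]
  exact Iff.rfl

lemma inner_eval (x : E2) (c s : ℝ) :
    (inner ℝ x (!₂[c,s] : E2) : ℝ) = x 0 * c + x 1 * s := by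
  simp [PiLp.inner_apply, Fin.sum_univ_two]; ring

/-- image of the Reuleaux triangle under projection to a direction -/
def img (v : E2) : Set ℝ := (fun x => (inner ℝ x v : ℝ)) '' ReuleauxTriangle

lemma vmem (a b : E2) (h : a = b) (hb : b ∈ ReuleauxTriangle) : a ∈ ReuleauxTriangle := h ▸ hb

lemma v1_mem : (!₂[1/2, aR] : E2) ∈ ReuleauxTriangle := by
  rw [memT]
  simp only [PiLp.toLp_apply, Matrix.cons_val_zero, Matrix.cons_val_one, Matrix.head_cons]
  refine ⟨by norm_num, by norm_num, by nlinarith [haR]⟩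

lemma v2_mem : (!₂[-(1/2), aR] : E2) ∈ ReuleauxTriangle := by
  rw [memT]
  simp only [PiLp.toLp_apply, Matrix.cons_val_zero, Matrix.cons_val_one, Matrix.head_cons]
  refine ⟨by norm_num, by norm_num, by nlinarith [haR]⟩

lemma v3_mem : (!₂[0, -(2*aR)] : E2) ∈ ReuleauxTriangle := by
  rw [memT]
  simp only [PiLp.toLp_apply, Matrix.cons_val_zero, Matrix.cons_val_one, Matrix.head_cons]
  refine ⟨by nlinarith [haR], by nlinarith [haR], by norm_num⟩

lemma key1 {c s : ℝ} (hu : c^2+s^2 = 1) (g1 : 1/2 ≤ c) (g2 : 1/2 ≤ c/2 + 3*aR*s) :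
    IsGreatest (img !₂[c,s]) (c/2 + aR*s) ∧ IsGreatest (img !₂[-c,-s]) (1 - (c/2 + aR*s)) := by
  constructor
  · constructor
    · exact ⟨_, v1_mem, by
        simp only [inner_eval, PiLp.toLp_apply, Matrix.cons_val_zero, Matrix.cons_val_one, Matrix.head_cons]
        ring⟩
    · rintro y ⟨x, hx, rfl⟩
      rw [memT] at hx
      simp only [inner_eval, PiLp.toLp_apply, Matrix.cons_val_zero, Matrix.cons_val_one, Matrix.head_cons]
      exact cone1 haR haR0 hx.2.1 hx.2.2 hu g1 g2
  · constructor
    · refine ⟨!₂[1/2-c, aR-s], ?_, ?_⟩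
      · rw [memT]
        simp only [PiLp.toLp_apply, Matrix.cons_val_zero, Matrix.cons_val_one, Matrix.head_cons]
        have := mem1 haR hu g1 g2
        refine ⟨by nlinarith [this.1], by nlinarith [this.2.1], by nlinarith [this.2.2]⟩
      · simp only [inner_eval, PiLp.toLp_apply, Matrix.cons_val_zero, Matrix.cons_val_one, Matrix.head_cons]
        linear_combination hu
    · rintro y ⟨x, hx, rfl⟩
      rw [memT] at hx
      simp only [inner_eval, PiLp.toLp_apply, Matrix.cons_val_zero, Matrix.cons_val_one, Matrix.head_cons]
      have := low1 (a := aR) hx.1 hu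
      linarith

lemma key2 {c s : ℝ} (hu : c^2+s^2 = 1) (g1 : 1/2 ≤ -c) (g2 : 1/2 ≤ -c/2 + 3*aR*s) :
    IsGreatest (img !₂[c,s]) (-c/2 + aR*s) ∧ IsGreatest (img !₂[-c,-s]) (1 - (-c/2 + aR*s)) := by
  constructor
  · constructor
    · exact ⟨_, v2_mem, by
        simp only [inner_eval, PiLp.toLp_apply, Matrix.cons_val_zero, Matrix.cons_val_one, Matrix.head_cons]
        ring⟩
    · rintro y ⟨x, hx, rfl⟩
      rw [memT] at hx
      simp only [inner_eval, PiLp.toLp_apply, Matrix.cons_val_zero, Matrix.cons_val_one, Matrix.head_cons]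
      exact cone2 haR haR0 hx.1 hx.2.2 hu g1 g2
  · constructor
    · refine ⟨!₂[-1/2-c, aR-s], ?_, ?_⟩
      · rw [memT]
        simp only [PiLp.toLp_apply, Matrix.cons_val_zero, Matrix.cons_val_one, Matrix.head_cons]
        have := mem2 haR hu g1 g2
        refine ⟨by nlinarith [this.1], by nlinarith [this.2.1], by nlinarith [this.2.2]⟩
      · simp only [inner_eval, PiLp.toLp_apply, Matrix.cons_val_zero, Matrix.cons_val_one, Matrix.head_cons]
        linear_combination hu
    · rintro y ⟨x, hx, rfl⟩
      rw [memT] at hx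
      simp only [inner_eval, PiLp.toLp_apply, Matrix.cons_val_zero, Matrix.cons_val_one, Matrix.head_cons]
      have := low2 (a := aR) hx.2.1 hu
      linarith

lemma key3 {c s : ℝ} (hu : c^2+s^2 = 1) (g1 : 1/2 ≤ -c/2 - 3*aR*s) (g2 : 1/2 ≤ c/2 - 3*aR*s) :
    IsGreatest (img !₂[c,s]) (-(2*aR)*s) ∧ IsGreatest (img !₂[-c,-s]) (1 - (-(2*aR)*s)) := by
  constructor
  · constructor
    · exact ⟨_, v3_mem, by
        simp only [inner_eval, PiLp.toLp_apply, Matrix.cons_val_zero, Matrix.cons_val_one, Matrix.head_cons]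
        ring⟩
    · rintro y ⟨x, hx, rfl⟩
      rw [memT] at hx
      simp only [inner_eval, PiLp.toLp_apply, Matrix.cons_val_zero, Matrix.cons_val_one, Matrix.head_cons]
      have := cone3 haR haR0 hx.1 hx.2.1 hu g1 g2
      linarith
  · constructor
    · refine ⟨!₂[-c, -(2*aR)-s], ?_, ?_⟩
      · rw [memT]
        simp only [PiLp.toLp_apply, Matrix.cons_val_zero, Matrix.cons_val_one, Matrix.head_cons]
        have := mem3 haR hu g1 g2
        refine ⟨by nlinarith [this.1], by nlinarith [this.2.1], by nlinarith [this.2.2]⟩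
      · simp only [inner_eval, PiLp.toLp_apply, Matrix.cons_val_zero, Matrix.cons_val_one, Matrix.head_cons]
        linear_combination hu
    · rintro y ⟨x, hx, rfl⟩
      rw [memT] at hx
      simp only [inner_eval, PiLp.toLp_apply, Matrix.cons_val_zero, Matrix.cons_val_one, Matrix.head_cons]
      have := low3 (a := aR) hx.2.2 hu
      linarith

lemma main_geom (θ : ℝ) : ∃ M : ℝ, IsGreatest (img (u θ)) M ∧
    IsGreatest (img !₂[-(Real.cos θ), -(Real.sin θ)]) (1 - M) := by
  have hu : (Real.cos θ)^2 + (Real.sin θ)^2 = 1 := by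
    rw [← Real.sin_sq_add_cos_sq θ]; ring
  have huθ : u θ = !₂[Real.cos θ, Real.sin θ] := rfl
  have hu' : (-Real.cos θ)^2 + (-Real.sin θ)^2 = 1 := by nlinarith
  rcases covering haR haR0 hu with h | h | h | h | h | h
  · exact ⟨_, huθ ▸ (key1 hu h.1 h.2).1, (key1 hu h.1 h.2).2⟩
  · exact ⟨_, huθ ▸ (key2 hu h.1 h.2).1, (key2 hu h.1 h.2).2⟩
  · exact ⟨_, huθ ▸ (key3 hu h.1 h.2).1, (key3 hu h.1 h.2).2⟩
  · -- apply key1 with (−cos, −sin)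
    obtain ⟨hA, hB⟩ := key1 hu' (by linarith [h.1]) (by linarith [h.2])
    simp only [neg_neg] at hB
    exact ⟨_, huθ ▸ hB, by rw [_root_.sub_sub_cancel]; exact hA⟩
  · obtain ⟨hA, hB⟩ := key2 hu' (by linarith [h.1]) (by linarith [h.2])
    simp only [neg_neg] at hA hB
    exact ⟨_, huθ ▸ hB, by rw [_root_.sub_sub_cancel]; exact hA⟩
  · obtain ⟨hA, hB⟩ := key3 hu' (by linarith [h.1]) (by linarith [h.2])
    simp only [neg_neg] at hB
    exact ⟨_, huθ ▸ hB, by rw [_root_.sub_sub_cancel]; exact hA⟩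

lemma support_and_width : ∃ h : ℝ → ℝ, IsSupportFn ReuleauxTriangle h ∧
    ∀ θ : ℝ, h θ + h (θ + π) = 1 := by
  refine ⟨fun θ => sSup (img (u θ)), fun θ => ?_, fun θ => ?_⟩
  · show IsGreatest (img (u θ)) (sSup (img (u θ)))
    obtain ⟨M, hM, -⟩ := main_geom θ
    rw [hM.csSup_eq]
    exact hM
  · show sSup (img (u θ)) + sSup (img (u (θ + π))) = 1
    obtain ⟨M, hM, hM'⟩ := main_geom θ
    have hpi : u (θ + π) = !₂[-(Real.cos θ), -(Real.sin θ)] := by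
      simp [u, Real.cos_add, Real.sin_add]
    rw [hM.csSup_eq, hpi, hM'.csSup_eq]
    ring

/-! ### Volume computation -/

noncomputable def Gi (t : ℝ) : ℝ := (Real.arcsin t + t*Real.sqrt (1-t^2))/2

lemma Gi_deriv {x : ℝ} (hx : x ∈ Set.Ioo (-1:ℝ) 1) :
    HasDerivAt Gi (Real.sqrt (1-x^2)) x := by
  obtain ⟨h1, h2⟩ := hx
  have hpos : 0 < 1 - x^2 := by nlinarith
  have hsq : Real.sqrt (1-x^2) > 0 := Real.sqrt_pos.2 hpos
  have harc : HasDerivAt Real.arcsin (1/Real.sqrt (1-x^2)) x :=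
    Real.hasDerivAt_arcsin (by linarith) (by linarith)
  have hinner : HasDerivAt (fun t : ℝ => 1 - t^2) (-2*x) x := by
    simpa using ((hasDerivAt_pow 2 x).const_sub 1)
  have hsqrt : HasDerivAt (fun t : ℝ => Real.sqrt (1-t^2)) (-2*x/(2*Real.sqrt (1-x^2))) x :=
    hinner.sqrt hpos.ne'
  have hprod : HasDerivAt (fun t : ℝ => t*Real.sqrt (1-t^2))
      (1*Real.sqrt (1-x^2) + x*(-2*x/(2*Real.sqrt (1-x^2)))) x :=
    (hasDerivAt_id x).mul hsqrt
  have hsum : HasDerivAt Gi ((1/Real.sqrt (1-x^2) +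
      (1*Real.sqrt (1-x^2) + x*(-2*x/(2*Real.sqrt (1-x^2)))))/2) x :=
    (harc.add hprod).div_const 2
  convert hsum using 1
  have h : Real.sqrt (1-x^2) * Real.sqrt (1-x^2) = 1 - x^2 :=
    Real.mul_self_sqrt hpos.le
  field_simp
  nlinarith [h]

lemma Gi_cont : Continuous Gi :=
  ((Real.continuous_arcsin.add (continuous_id.mul
    (Real.continuous_sqrt.comp (by continuity)))).div_const 2)

lemma sqrt_int {A B : ℝ} (hA : -1 ≤ A) (hAB : A ≤ B) (hB : B ≤ 1) :
    ∫ x in A..B, Real.sqrt (1-x^2) = Gi B - Gi A := by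
  refine intervalIntegral.integral_eq_sub_of_hasDeriv_right_of_le hAB
    (Gi_cont.continuousOn) (fun x hx => ?_) ?_
  · exact (Gi_deriv ⟨by linarith [hx.1], by linarith [hx.2]⟩).hasDerivWithinAt
  · exact (Continuous.intervalIntegrable (by continuity) _ _)

lemma arcsin_half : Real.arcsin (1/2) = π/6 := by
  rw [← Real.sin_pi_div_six, Real.arcsin_sin (by linarith [Real.pi_pos]) (by linarith [Real.pi_pos])]

lemma sqrt34 : Real.sqrt (3/4) = Real.sqrt 3/2 := by
  rw [show (3:ℝ)/4 = (Real.sqrt 3/2)^2 by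
    rw [div_pow, Real.sq_sqrt (by norm_num : (0:ℝ) ≤ 3)]
    norm_num]
  exact Real.sqrt_sq (by positivity)

lemma Gi_one : Gi 1 = π/4 := by rw [Gi]; simp [Real.arcsin_one]; ring
lemma Gi_zero : Gi 0 = 0 := by simp [Gi]
lemma Gi_half : Gi (1/2) = π/12 + Real.sqrt 3/16 + Real.sqrt 3/16 := by
  rw [Gi, arcsin_half, show (1:ℝ) - (1/2)^2 = 3/4 by norm_num, sqrt34]; ring
lemma Gi_neg_half : Gi (-(1/2)) = -(π/12 + Real.sqrt 3/16 + Real.sqrt 3/16) := by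
  rw [Gi, show Real.arcsin (-(1/2)) = -(π/6) by rw [Real.arcsin_neg, arcsin_half],
    show (1:ℝ) - (-(1/2))^2 = 3/4 by norm_num, sqrt34]; ring
lemma Gi_neg_one : Gi (-1) = -(π/4) := by
  rw [Gi]; simp [Real.arcsin_neg_one]; ring

lemma h3aR : 3*aR = Real.sqrt 3/2 := by
  have h : Real.sqrt 3 * Real.sqrt 3 = 3 := Real.mul_self_sqrt (by norm_num)
  rw [aR]
  have := sqrt3_pos
  field_simp
  linarith

/-- planar model of the Reuleaux triangle -/
def Tp : Set (ℝ×ℝ) := {p | (p.1-1/2)^2 + (p.2-aR)^2 ≤ 1 ∧ (p.1+1/2)^2 + (p.2-aR)^2 ≤ 1 ∧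
  p.1^2 + (p.2+2*aR)^2 ≤ 1}

lemma Tp_meas : MeasurableSet Tp := by
  have hT : Tp = {p : ℝ×ℝ | (p.1-1/2)^2+(p.2-aR)^2 ≤ 1} ∩
      ({p : ℝ×ℝ | (p.1+1/2)^2+(p.2-aR)^2 ≤ 1} ∩
        {p : ℝ×ℝ | p.1^2+(p.2+2*aR)^2 ≤ 1}) := rfl
  rw [hT]
  exact ((isClosed_le (by continuity) continuous_const).inter
    ((isClosed_le (by continuity) continuous_const).inter
      (isClosed_le (by continuity) continuous_const))).measurableSet

noncomputable def e2 : EuclideanSpace ℝ (Fin 2) ≃ᵐ (ℝ × ℝ) :=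
  (MeasurableEquiv.toLp 2 (Fin 2 → ℝ)).symm.trans (MeasurableEquiv.finTwoArrow)

lemma volT_eq_volTp : volume ReuleauxTriangle = volume Tp := by
  have mp : MeasurePreserving e2 volume volume :=
    (volume_preserving_finTwoArrow ℝ).comp
      (EuclideanSpace.volume_preserving_symm_measurableEquiv_toLp (Fin 2))
  have hTT : ReuleauxTriangle = e2 ⁻¹' Tp := by
    ext x
    rw [memT]
    exact Iff.rfl
  rw [hTT, mp.measure_preimage Tp_meas.nullMeasurableSet]

def Rp : Set (ℝ×ℝ) := Tp ∩ {p | 0 ≤ p.1}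
def Rm : Set (ℝ×ℝ) := Tp ∩ {p | p.1 < 0}

lemma Rp_meas : MeasurableSet Rp :=
  Tp_meas.inter (measurableSet_le measurable_const measurable_fst)
lemma Rm_meas : MeasurableSet Rm :=
  Tp_meas.inter (measurableSet_lt measurable_fst measurable_const)

lemma slice_plus {x : ℝ} (hx : x ∈ Set.Ico (0:ℝ) (1/2)) :
    Prod.mk x ⁻¹' Rp =
      Set.Icc (aR - Real.sqrt (1-(x+1/2)^2)) (-(2*aR) + Real.sqrt (1-x^2)) := by
  obtain ⟨hx0, hx1⟩ := hx
  set r2 := Real.sqrt (1-(x+1/2)^2) with hr2def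
  set r3 := Real.sqrt (1-x^2) with hr3def
  have hr2sq : r2^2 = 1-(x+1/2)^2 := Real.sq_sqrt (by nlinarith)
  have hr3sq : r3^2 = 1-x^2 := Real.sq_sqrt (by nlinarith)
  have hr2pos : 0 < r2 := Real.sqrt_pos.2 (by nlinarith)
  have hr3pos : 0 < r3 := Real.sqrt_pos.2 (by nlinarith)
  have hr3aR : 3*aR ≤ r3 := by nlinarith [haR, haR0]
  have hr2le : r2 ≤ 1 := by nlinarith
  have hr23 : r3 ≤ 3*aR + r2 := by nlinarith [haR, haR0]
  ext y
  simp only [Rp, Tp, Set.mem_preimage, Set.mem_inter_iff, Set.mem_setOf_eq, Set.mem_Icc]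
  constructor
  · rintro ⟨⟨h1, h2, h3⟩, -⟩
    constructor
    · nlinarith [sq_nonneg (y - aR + r2)]
    · nlinarith [sq_nonneg (y + 2*aR - r3)]
  · rintro ⟨hl, hu⟩
    have h6 : 1 ≤ 6*aR := by nlinarith [haR, haR0]
    have hw2 : 0 ≤ (y + 2*aR) + r3 := by linarith
    refine ⟨⟨?_, ?_, ?_⟩, hx0⟩
    · nlinarith
    · nlinarith
    · nlinarith [mul_nonneg (by linarith : (0:ℝ) ≤ r3 - (y + 2*aR)) hw2]

lemma slice_minus {x : ℝ} (hx : x ∈ Set.Ioo (-(1/2):ℝ) 0) :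
    Prod.mk x ⁻¹' Rm =
      Set.Icc (aR - Real.sqrt (1-(x-1/2)^2)) (-(2*aR) + Real.sqrt (1-x^2)) := by
  obtain ⟨hx0, hx1⟩ := hx
  set r1 := Real.sqrt (1-(x-1/2)^2) with hr1def
  set r3 := Real.sqrt (1-x^2) with hr3def
  have hr1sq : r1^2 = 1-(x-1/2)^2 := Real.sq_sqrt (by nlinarith)
  have hr3sq : r3^2 = 1-x^2 := Real.sq_sqrt (by nlinarith)
  have hr1pos : 0 < r1 := Real.sqrt_pos.2 (by nlinarith)
  have hr3pos : 0 < r3 := Real.sqrt_pos.2 (by nlinarith)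
  have hr3aR : 3*aR ≤ r3 := by nlinarith [haR, haR0]
  have hr1le : r1 ≤ 1 := by nlinarith
  have hr13 : r3 ≤ 3*aR + r1 := by nlinarith [haR, haR0]
  ext y
  simp only [Rm, Tp, Set.mem_preimage, Set.mem_inter_iff, Set.mem_setOf_eq, Set.mem_Icc]
  constructor
  · rintro ⟨⟨h1, h2, h3⟩, -⟩
    constructor
    · nlinarith [sq_nonneg (y - aR + r1)]
    · nlinarith [sq_nonneg (y + 2*aR - r3)]
  · rintro ⟨hl, hu⟩
    have h6 : 1 ≤ 6*aR := by nlinarith [haR, haR0]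
    have hw2 : 0 ≤ (y + 2*aR) + r3 := by linarith
    refine ⟨⟨?_, ?_, ?_⟩, hx1⟩
    · nlinarith
    · nlinarith
    · nlinarith [mul_nonneg (by linarith : (0:ℝ) ≤ r3 - (y + 2*aR)) hw2]

lemma slice_plus_empty {x : ℝ} (hx : x ∉ Set.Ico (0:ℝ) (1/2)) (hx' : x ≠ 1/2) :
    Prod.mk x ⁻¹' Rp = ∅ := by
  rw [Set.mem_Ico, not_and_or] at hx
  ext y
  simp only [Rp, Tp, Set.mem_preimage, Set.mem_inter_iff, Set.mem_setOf_eq,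
    Set.mem_empty_iff_false, iff_false, not_and]
  rintro ⟨h1, h2, h3⟩ h0
  rcases hx with hx | hx
  · exact hx h0
  · push_neg at hx
    have : 1/2 < x := lt_of_le_of_ne hx (Ne.symm hx')
    nlinarith [sq_nonneg (y - aR)]

lemma slice_minus_empty {x : ℝ} (hx : x ∉ Set.Ioo (-(1/2):ℝ) 0) (hx' : x ≠ -(1/2)) :
    Prod.mk x ⁻¹' Rm = ∅ := by
  rw [Set.mem_Ioo, not_and_or] at hx
  ext y
  simp only [Rm, Tp, Set.mem_preimage, Set.mem_inter_iff, Set.mem_setOf_eq,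
    Set.mem_empty_iff_false, iff_false, not_and]
  rintro ⟨h1, h2, h3⟩ h0
  rcases hx with hx | hx
  · push_neg at hx
    have : x < -(1/2) := lt_of_le_of_ne hx hx'
    nlinarith [sq_nonneg (y - aR)]
  · push_neg at hx
    exact absurd h0 (not_lt.2 hx)

noncomputable def Fp (x : ℝ) : ℝ := Real.sqrt (1-x^2) + Real.sqrt (1-(x+1/2)^2) - 3*aR
noncomputable def Fm (x : ℝ) : ℝ := Real.sqrt (1-x^2) + Real.sqrt (1-(x-1/2)^2) - 3*aR

lemma Fp_cont : Continuous Fp := by unfold Fp; continuity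
lemma Fm_cont : Continuous Fm := by unfold Fm; continuity

lemma vol_Rp : volume Rp = ENNReal.ofReal (π/4 - Real.sqrt 3/4) := by
  rw [MeasureTheory.Measure.volume_eq_prod, MeasureTheory.Measure.prod_apply Rp_meas]
  have hae : ∀ᵐ x : ℝ, x ≠ 1/2 := by
    rw [Filter.Eventually, mem_ae_iff]
    simpa using Real.volume_singleton (x := 1/2)
  have hcong : (fun x => volume (Prod.mk x ⁻¹' Rp)) =ᵐ[volume]
      (Set.Ico (0:ℝ) (1/2)).indicator (fun x => ENNReal.ofReal (Fp x)) := by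
    filter_upwards [hae] with x hx
    by_cases hmem : x ∈ Set.Ico (0:ℝ) (1/2)
    · rw [slice_plus hmem, Real.volume_Icc, Set.indicator_of_mem hmem]
      congr 1
      rw [Fp]; ring
    · rw [slice_plus_empty hmem hx, Set.indicator_of_notMem hmem]
      simp
  rw [lintegral_congr_ae hcong, lintegral_indicator measurableSet_Ico]
  have hFpos : 0 ≤ᵐ[volume.restrict (Set.Ico (0:ℝ) (1/2))] Fp := by
    rw [Filter.EventuallyLE, ae_restrict_iff' measurableSet_Ico]
    refine Filter.Eventually.of_forall (fun x hx => ?_)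
    obtain ⟨hx0, hx1⟩ := hx
    have h1 : 3*aR ≤ Real.sqrt (1-x^2) := by
      nlinarith [Real.sq_sqrt (by nlinarith : (0:ℝ) ≤ 1-x^2), Real.sqrt_nonneg (1-x^2),
        haR, haR0]
    have h2 : 0 ≤ Real.sqrt (1-(x+1/2)^2) := Real.sqrt_nonneg _
    simp only [Pi.zero_apply, Fp]
    linarith
  have hInt : IntegrableOn Fp (Set.Ico (0:ℝ) (1/2)) volume :=
    (Fp_cont.continuousOn.integrableOn_compact isCompact_Icc).mono_set
      Set.Ico_subset_Icc_self
  rw [← MeasureTheory.ofReal_integral_eq_lintegral_ofReal hInt hFpos]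
  congr 1
  rw [MeasureTheory.setIntegral_congr_set MeasureTheory.Ico_ae_eq_Ioc,
    ← intervalIntegral.integral_of_le (by norm_num : (0:ℝ) ≤ 1/2)]
  have i1 : IntervalIntegrable (fun x : ℝ => Real.sqrt (1-x^2)) volume 0 (1/2) :=
    Continuous.intervalIntegrable (by continuity) _ _
  have i2 : IntervalIntegrable (fun x : ℝ => Real.sqrt (1-(x+1/2)^2)) volume 0 (1/2) :=
    Continuous.intervalIntegrable (by continuity) _ _
  have i3 : IntervalIntegrable (fun _ : ℝ => 3*aR) volume 0 (1/2) :=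
    intervalIntegrable_const
  have hsplit : ∫ x in (0:ℝ)..(1/2), Fp x
      = (∫ x in (0:ℝ)..(1/2), Real.sqrt (1-x^2))
        + (∫ x in (0:ℝ)..(1/2), Real.sqrt (1-(x+1/2)^2))
        - ∫ _ in (0:ℝ)..(1/2), 3*aR := by
    rw [← intervalIntegral.integral_add i1 i2, ← intervalIntegral.integral_sub (i1.add i2) i3]
    rfl
  rw [hsplit]
  have e1 : ∫ x in (0:ℝ)..(1/2), Real.sqrt (1-x^2) = Gi (1/2) - Gi 0 :=
    sqrt_int (by norm_num) (by norm_num) (by norm_num)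
  have e2 : ∫ x in (0:ℝ)..(1/2), Real.sqrt (1-(x+1/2)^2)
      = Gi 1 - Gi (1/2) := by
    rw [intervalIntegral.integral_comp_add_right (fun t => Real.sqrt (1-t^2)) (1/2)]
    rw [show (0:ℝ)+1/2 = 1/2 by norm_num, show (1:ℝ)/2+1/2 = 1 by norm_num]
    exact sqrt_int (by norm_num) (by norm_num) (by norm_num)
  rw [e1, e2, intervalIntegral.integral_const, Gi_one, Gi_zero, Gi_half]
  rw [smul_eq_mul]
  rw [show ((1:ℝ)/2 - 0) * (3*aR) = (3*aR)/2 by ring, h3aR]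
  ring

lemma vol_Rm : volume Rm = ENNReal.ofReal (π/4 - Real.sqrt 3/4) := by
  rw [MeasureTheory.Measure.volume_eq_prod, MeasureTheory.Measure.prod_apply Rm_meas]
  have hae : ∀ᵐ x : ℝ, x ≠ -(1/2) := by
    rw [Filter.Eventually, mem_ae_iff]
    simpa using Real.volume_singleton (x := -(1/2))
  have hcong : (fun x => volume (Prod.mk x ⁻¹' Rm)) =ᵐ[volume]
      (Set.Ioo (-(1/2):ℝ) 0).indicator (fun x => ENNReal.ofReal (Fm x)) := by
    filter_upwards [hae] with x hx
    by_cases hmem : x ∈ Set.Ioo (-(1/2):ℝ) 0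
    · rw [slice_minus hmem, Real.volume_Icc, Set.indicator_of_mem hmem]
      congr 1
      rw [Fm]; ring
    · rw [slice_minus_empty hmem hx, Set.indicator_of_notMem hmem]
      simp
  rw [lintegral_congr_ae hcong, lintegral_indicator measurableSet_Ioo]
  have hFpos : 0 ≤ᵐ[volume.restrict (Set.Ioo (-(1/2):ℝ) 0)] Fm := by
    rw [Filter.EventuallyLE, ae_restrict_iff' measurableSet_Ioo]
    refine Filter.Eventually.of_forall (fun x hx => ?_)
    obtain ⟨hx0, hx1⟩ := hx
    have h1 : 3*aR ≤ Real.sqrt (1-x^2) := by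
      nlinarith [Real.sq_sqrt (by nlinarith : (0:ℝ) ≤ 1-x^2), Real.sqrt_nonneg (1-x^2),
        haR, haR0]
    have h2 : 0 ≤ Real.sqrt (1-(x-1/2)^2) := Real.sqrt_nonneg _
    simp only [Pi.zero_apply, Fm]
    linarith
  have hInt : IntegrableOn Fm (Set.Ioo (-(1/2):ℝ) 0) volume :=
    (Fm_cont.continuousOn.integrableOn_compact isCompact_Icc).mono_set
      Set.Ioo_subset_Icc_self
  rw [← MeasureTheory.ofReal_integral_eq_lintegral_ofReal hInt hFpos]
  congr 1
  rw [MeasureTheory.setIntegral_congr_set MeasureTheory.Ioo_ae_eq_Ioc,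
    ← intervalIntegral.integral_of_le (by norm_num : (-(1/2):ℝ) ≤ 0)]
  have i1 : IntervalIntegrable (fun x : ℝ => Real.sqrt (1-x^2)) volume (-(1/2)) 0 :=
    Continuous.intervalIntegrable (by continuity) _ _
  have i2 : IntervalIntegrable (fun x : ℝ => Real.sqrt (1-(x-1/2)^2)) volume (-(1/2)) 0 :=
    Continuous.intervalIntegrable (by continuity) _ _
  have i3 : IntervalIntegrable (fun _ : ℝ => 3*aR) volume (-(1/2)) 0 :=
    intervalIntegrable_const
  have hsplit : ∫ x in (-(1/2):ℝ)..0, Fm x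
      = (∫ x in (-(1/2):ℝ)..0, Real.sqrt (1-x^2))
        + (∫ x in (-(1/2):ℝ)..0, Real.sqrt (1-(x-1/2)^2))
        - ∫ _ in (-(1/2):ℝ)..0, 3*aR := by
    rw [← intervalIntegral.integral_add i1 i2, ← intervalIntegral.integral_sub (i1.add i2) i3]
    rfl
  rw [hsplit]
  have e1 : ∫ x in (-(1/2):ℝ)..0, Real.sqrt (1-x^2) = Gi 0 - Gi (-(1/2)) :=
    sqrt_int (by norm_num) (by norm_num) (by norm_num)
  have e2 : ∫ x in (-(1/2):ℝ)..0, Real.sqrt (1-(x-1/2)^2)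
      = Gi (-(1/2)) - Gi (-1) := by
    rw [intervalIntegral.integral_comp_sub_right (fun t => Real.sqrt (1-t^2)) (1/2)]
    rw [show (-(1/2):ℝ)-1/2 = -1 by norm_num, show (0:ℝ)-1/2 = -(1/2) by norm_num]
    exact sqrt_int (by norm_num) (by norm_num) (by norm_num)
  rw [e1, e2, intervalIntegral.integral_const, Gi_zero, Gi_neg_half, Gi_neg_one]
  rw [smul_eq_mul]
  rw [show ((0:ℝ) - (-(1/2))) * (3*aR) = (3*aR)/2 by ring, h3aR]
  ring

lemma sqrt3_lt_pi : Real.sqrt 3 < π := by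
  have h : Real.sqrt 3 < 2 := by
    nlinarith [Real.sq_sqrt (by norm_num : (0:ℝ) ≤ 3), Real.sqrt_nonneg 3]
  linarith [Real.pi_gt_three]

lemma vol_Tp : volume Tp = ENNReal.ofReal ((π - Real.sqrt 3) / 2) := by
  have hsplit : Tp = Rm ∪ Rp := by
    ext p
    simp only [Rm, Rp, Set.mem_union, Set.mem_inter_iff, Set.mem_setOf_eq]
    rcases lt_or_ge p.1 0 with h | h
    · tauto
    · tauto
  have hdisj : Disjoint Rm Rp := by
    rw [Set.disjoint_iff]
    rintro p ⟨⟨-, (h1 : p.1 < 0)⟩, -, (h2 : 0 ≤ p.1)⟩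
    exact absurd h2 (not_le.2 h1)
  rw [hsplit, measure_union hdisj Rp_meas, vol_Rm, vol_Rp,
    ← ENNReal.ofReal_add (by nlinarith [sqrt3_lt_pi]) (by nlinarith [sqrt3_lt_pi])]
  congr 1
  ring

/-- The Reuleaux triangle is a convex body of constant width 1 whose area is `(π − √3)/2`. -/
theorem reuleauxTriangle_constant_width_and_area :
    ReuleauxTriangle.Nonempty ∧ IsCompact ReuleauxTriangle ∧ Convex ℝ ReuleauxTriangle ∧
    (∃ h : ℝ → ℝ, IsSupportFn ReuleauxTriangle h ∧ ∀ θ : ℝ, h θ + h (θ + π) = 1) ∧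
    volume ReuleauxTriangle = ENNReal.ofReal ((π - Real.sqrt 3) / 2) := by
  refine ⟨⟨_, v1_mem⟩, ?_, ?_, support_and_width, ?_⟩
  · exact ((isCompact_closedBall _ _).inter_right Metric.isClosed_closedBall).inter_right
      Metric.isClosed_closedBall
  · exact ((convex_closedBall _ _).inter (convex_closedBall _ _)).inter (convex_closedBall _ _)
  · exact volT_eq_volTp.trans vol_Tp
end

section
/- Let K ⊆ ℝ² be a convex body of constant width 1 with support function h, and let γ(θ) = h(θ) u(θ) + h'(θ) u'(θ). If (θ₀, θ₁) ⊆ [0, 2π] is an interval on which h''(θ) + h(θ) > 0 for almost every θ ∈ (θ₀, θ₁), then γ is injective on (θ₀, θ₁). -/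
open Real MeasureTheory

/-- The rotated vector `u' θ = (−sin θ, cos θ)`, the derivative of `u`. -/
noncomputable def u' (θ : ℝ) : EuclideanSpace ℝ (Fin 2) := !₂[-Real.sin θ, Real.cos θ]

lemma inner_u (x : EuclideanSpace ℝ (Fin 2)) (θ : ℝ) :
    (inner ℝ x (u θ) : ℝ) = x 0 * Real.cos θ + x 1 * Real.sin θ := by
  simp [u, PiLp.inner_apply, Fin.sum_univ_two]; ring

lemma inner_u' (x : EuclideanSpace ℝ (Fin 2)) (θ : ℝ) :
    (inner ℝ x (u' θ) : ℝ) = -(x 0 * Real.sin θ) + x 1 * Real.cos θ := by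
  simp [u', PiLp.inner_apply, Fin.sum_univ_two]; ring

lemma inner_u_add (x : EuclideanSpace ℝ (Fin 2)) (θ d : ℝ) :
    (inner ℝ x (u (θ + d)) : ℝ) = (inner ℝ x (u θ) : ℝ) * Real.cos d + (inner ℝ x (u' θ) : ℝ) * Real.sin d := by
  simp only [inner_u, inner_u', Real.cos_add, Real.sin_add]; ring

lemma inner_u_pi (x : EuclideanSpace ℝ (Fin 2)) (θ : ℝ) :
    (inner ℝ x (u (θ + π)) : ℝ) = -(inner ℝ x (u θ) : ℝ) := by
  simp only [inner_u, Real.cos_add_pi, Real.sin_add_pi]; ring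

lemma inner_u'_pi (x : EuclideanSpace ℝ (Fin 2)) (θ : ℝ) :
    (inner ℝ x (u' (θ + π)) : ℝ) = -(inner ℝ x (u' θ) : ℝ) := by
  simp only [inner_u', Real.cos_add_pi, Real.sin_add_pi]; ring

lemma inner_u_two_pi (x : EuclideanSpace ℝ (Fin 2)) (θ : ℝ) :
    (inner ℝ x (u (θ - 2*π)) : ℝ) = (inner ℝ x (u θ) : ℝ) := by
  simp only [inner_u]
  rw [Real.cos_sub_two_pi, Real.sin_sub_two_pi]

lemma basis_expand (θ : ℝ) (z : EuclideanSpace ℝ (Fin 2)) :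
    (inner ℝ z (u θ) : ℝ) • u θ + (inner ℝ z (u' θ) : ℝ) • u' θ = z := by
  have hs := Real.sin_sq_add_cos_sq θ
  rw [inner_u, inner_u']
  apply PiLp.ext
  intro i
  fin_cases i <;>
      simp [inner_u, inner_u', u, u', PiLp.smul_apply, smul_eq_mul]
  · linear_combination z 0 * hs
  · linear_combination z 1 * hs

lemma sin_ineq_nonpos {c : ℝ} (H : ∀ d : ℝ, c * Real.sin d ≤ 1 - Real.cos d) : c ≤ 0 := by
  by_contra hc
  push_neg at hc
  set d : ℝ := min (c/2) (1/2) with hd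
  have hd0 : 0 < d := lt_min (by linarith) (by norm_num)
  have hd1 : d ≤ 1/2 := min_le_right _ _
  have hdc : d ≤ c/2 := min_le_left _ _
  have hsin : (3/4) * d ≤ Real.sin d := by
    have h2 := Real.sin_gt_sub_cube hd0
    have h3' : d^2 ≤ (1/2)^2 := by nlinarith
    have h3 : d^3 ≤ d * (1/2)^2 := by nlinarith [mul_le_mul_of_nonneg_left h3' hd0.le]
    nlinarith
  have hcos : 1 - Real.cos d ≤ d^2/2 := by
    have := Real.one_sub_sq_div_two_le_cos (x := d)
    linarith
  have h1 := H d
  have hsinpos : 0 < Real.sin d := by nlinarith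
  -- c * sin d ≥ c * (3/4) d, and 1 - cos d ≤ d^2/2 ≤ d/4 ≤ (c/2)/... 
  nlinarith
section Main
variable {K : Set (EuclideanSpace ℝ (Fin 2))} {h : ℝ → ℝ}

/-- support inequality -/
lemma supp_le (hsupp : ∀ θ : ℝ, IsGreatest ((fun x => (inner ℝ x (u θ) : ℝ)) '' K) (h θ))
    {x : EuclideanSpace ℝ (Fin 2)} (hx : x ∈ K) (θ : ℝ) : (inner ℝ x (u θ) : ℝ) ≤ h θ :=
  (hsupp θ).2 ⟨x, hx, rfl⟩

lemma exists_max (hsupp : ∀ θ : ℝ, IsGreatest ((fun x => (inner ℝ x (u θ) : ℝ)) '' K) (h θ))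
    (θ : ℝ) : ∃ x ∈ K, (inner ℝ x (u θ) : ℝ) = h θ := by
  obtain ⟨x, hx, he⟩ := (hsupp θ).1
  exact ⟨x, hx, he⟩

lemma key_deriv (hsupp : ∀ θ : ℝ, IsGreatest ((fun x => (inner ℝ x (u θ) : ℝ)) '' K) (h θ))
    (hwidth : ∀ θ : ℝ, h θ + h (θ + π) = 1) (θ : ℝ) :
    ∃ x ∈ K, (inner ℝ x (u θ) : ℝ) = h θ ∧ HasDerivAt h (inner ℝ x (u' θ) : ℝ) θ := by
  obtain ⟨x, hxK, hxe⟩ := exists_max hsupp θ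
  obtain ⟨y, hyK, hye⟩ := exists_max hsupp (θ + π)
  set q : ℝ := inner ℝ x (u' θ) with hq
  set Q : ℝ := -(inner ℝ y (u' (θ + π)) : ℝ) with hQ
  -- lower bound
  have hlow : ∀ d : ℝ, h θ * Real.cos d + q * Real.sin d ≤ h (θ + d) := by
    intro d
    have := supp_le hsupp hxK (θ + d)
    rwa [inner_u_add, hxe] at this
  -- upper bound
  have hup : ∀ d : ℝ, h (θ + d) ≤ h θ * Real.cos d + Q * Real.sin d + (1 - Real.cos d) := by
    intro d
    have h1 := supp_le hsupp hyK (θ + π + d)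
    rw [inner_u_add, hye] at h1
    have h2 : h (θ + d) + h (θ + d + π) = 1 := hwidth (θ + d)
    have h3 : h (θ + π) = 1 - h θ := by have := hwidth θ; linarith
    have h4 : θ + π + d = θ + d + π := by ring
    rw [h4] at h1
    rw [h3] at h1
    simp only [hQ]
    linarith
  -- q = Q
  have hqQ : q = Q := by
    have hle : ∀ c ∈ ({q - Q, Q - q} : Set ℝ), c ≤ 0 := by
      rintro c hc
      apply sin_ineq_nonpos
      intro d
      rcases hc with rfl | rfl
      · have := le_trans (hlow d) (hup d); linarith
      · have h1 := le_trans (hlow (-d)) (hup (-d))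
        rw [Real.sin_neg, Real.cos_neg] at h1
        linarith
    have h1 := hle (q - Q) (by simp)
    have h2 := hle (Q - q) (by simp)
    linarith
  refine ⟨x, hxK, hxe, ?_⟩
  rw [hasDerivAt_iff_isLittleO_nhds_zero]
  rw [Asymptotics.isLittleO_iff]
  intro c hc
  -- two smooth comparison functions
  have hF : HasDerivAt (fun d : ℝ => h θ * Real.cos d + q * Real.sin d) q 0 := by
    have := ((Real.hasDerivAt_cos 0).const_mul (h θ)).add ((Real.hasDerivAt_sin 0).const_mul q)
    simpa [Pi.add_def] using this
  have hG : HasDerivAt (fun d : ℝ => h θ * Real.cos d + q * Real.sin d + (1 - Real.cos d)) q 0 := by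
    have := hF.add (((Real.hasDerivAt_cos 0).const_mul (1:ℝ)).neg.const_add 1)
    simpa [Pi.add_def, sub_eq_add_neg] using this
  have hF' := (hasDerivAt_iff_isLittleO_nhds_zero.1 hF)
  have hG' := (hasDerivAt_iff_isLittleO_nhds_zero.1 hG)
  rw [Asymptotics.isLittleO_iff] at hF' hG'
  filter_upwards [hF' hc, hG' hc] with d h1 h2
  simp only [zero_add, Real.cos_zero, Real.sin_zero, mul_one, mul_zero, add_zero, zero_sub,
    smul_eq_mul, sub_zero, Real.norm_eq_abs] at h1 h2 ⊢
  have hl := hlow d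
  have hu := hup d
  rw [← hqQ] at hu
  rw [abs_le] at h1 h2 ⊢
  constructor
  · nlinarith [h1.1, hl]
  · nlinarith [h2.2, hu]


lemma arc_eq (hsupp : ∀ θ : ℝ, IsGreatest ((fun x => (inner ℝ x (u θ) : ℝ)) '' K) (h θ))
    {x : EuclideanSpace ℝ (Fin 2)} (hx : x ∈ K) {α β : ℝ} (hab : α < β) (hπ : β - α < π)
    (hα : (inner ℝ x (u α) : ℝ) = h α) (hβ : (inner ℝ x (u β) : ℝ) = h β) :
    ∀ θ ∈ Set.Icc α β, h θ = (inner ℝ x (u θ) : ℝ) := by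
  rintro θ ⟨h1, h2⟩
  have hsd : 0 < Real.sin (β - α) :=
    Real.sin_pos_of_pos_of_lt_pi (by linarith) (by linarith)
  have hs1 : 0 ≤ Real.sin (β - θ) :=
    Real.sin_nonneg_of_nonneg_of_le_pi (by linarith) (by linarith)
  have hs2 : 0 ≤ Real.sin (θ - α) :=
    Real.sin_nonneg_of_nonneg_of_le_pi (by linarith) (by linarith)
  have key : ∀ z : EuclideanSpace ℝ (Fin 2), Real.sin (β - α) * (inner ℝ z (u θ) : ℝ)
      = Real.sin (β - θ) * (inner ℝ z (u α) : ℝ) + Real.sin (θ - α) * (inner ℝ z (u β) : ℝ) := by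
    intro z
    simp only [inner_u, Real.sin_sub]
    ring
  obtain ⟨z, hzK, hze⟩ := exists_max hsupp θ
  have c1 : Real.sin (β - α) * h θ ≤ Real.sin (β - α) * (inner ℝ x (u θ) : ℝ) := by
    rw [key x, hα, hβ, ← hze, key z]
    have := supp_le hsupp hzK α
    have := supp_le hsupp hzK β
    nlinarith
  have c2 : (inner ℝ x (u θ) : ℝ) ≤ h θ := supp_le hsupp hx θ
  nlinarith

lemma agree_false {θ₀ θ₁ : ℝ}
    (hpos : ∀ᵐ θ : ℝ, θ ∈ Set.Ioo θ₀ θ₁ → 0 < deriv (deriv h) θ + h θ)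
    {x : EuclideanSpace ℝ (Fin 2)} {c d : ℝ} (hcd : c < d)
    (hsub : Set.Ioo c d ⊆ Set.Ioo θ₀ θ₁)
    (hagree : ∀ θ ∈ Set.Ioo c d, h θ = (inner ℝ x (u θ) : ℝ)) : False := by
  set f : ℝ → ℝ := fun s => x 0 * Real.cos s + x 1 * Real.sin s with hf
  have hagree' : Set.EqOn h f (Set.Ioo c d) := by
    intro θ hθ; rw [hagree θ hθ, inner_u]
  have hf1 : ∀ s : ℝ, HasDerivAt f (-(x 0) * Real.sin s + x 1 * Real.cos s) s := by
    intro s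
    have := ((Real.hasDerivAt_cos s).const_mul (x 0)).add ((Real.hasDerivAt_sin s).const_mul (x 1))
    simpa [mul_comm, hf, Pi.add_def] using this
  have hderivf : deriv f = fun s => -(x 0) * Real.sin s + x 1 * Real.cos s :=
    funext fun s => (hf1 s).deriv
  have step1 : Set.EqOn (deriv h) (deriv f) (Set.Ioo c d) := by
    intro θ hθ
    exact Filter.EventuallyEq.deriv_eq
      (Filter.eventuallyEq_of_mem (isOpen_Ioo.mem_nhds hθ) hagree')
  have step2 : ∀ θ ∈ Set.Ioo c d, deriv (deriv h) θ + h θ = 0 := by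
    intro θ hθ
    have e2 : deriv (deriv h) θ = deriv (deriv f) θ :=
      Filter.EventuallyEq.deriv_eq
        (Filter.eventuallyEq_of_mem (isOpen_Ioo.mem_nhds hθ) step1)
    have hf2 : HasDerivAt (fun s => -(x 0) * Real.sin s + x 1 * Real.cos s)
        (-(x 0) * Real.cos θ + x 1 * -Real.sin θ) θ := by
      have := ((Real.hasDerivAt_sin θ).const_mul (-(x 0))).add ((Real.hasDerivAt_cos θ).const_mul (x 1))
      simpa [mul_comm, Pi.add_def] using this
    have e3 : deriv (deriv f) θ = -(x 0) * Real.cos θ + x 1 * -Real.sin θ := by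
      rw [hderivf]; exact hf2.deriv
    rw [e2, e3, hagree θ hθ, inner_u]
    ring
  have hae : ∀ᵐ θ : ℝ, θ ∉ Set.Ioo c d := by
    filter_upwards [hpos] with θ hp hθ
    have := hp (hsub hθ)
    rw [step2 θ hθ] at this
    exact lt_irrefl 0 this
  have h0 : volume (Set.Ioo c d) = 0 := by
    have h0' : volume {a : ℝ | c < a ∧ a < d} = 0 := by simpa using ae_iff.1 hae
    exact h0'
  rw [Real.volume_Ioo] at h0
  rw [ENNReal.ofReal_eq_zero] at h0
  linarith


lemma h_periodic (hsupp : ∀ θ : ℝ, IsGreatest ((fun x => (inner ℝ x (u θ) : ℝ)) '' K) (h θ))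
    (b : ℝ) : h (b - 2*π) = h b := by
  have hu : u (b - 2*π) = u b := by
    apply PiLp.ext; intro i
    fin_cases i <;> simp [u, Real.cos_sub_two_pi, Real.sin_sub_two_pi]
  have h1 := hsupp (b - 2*π)
  have h2 := hsupp b
  rw [← hu] at h2
  exact h1.unique h2

private theorem main_aux
    (K : Set (EuclideanSpace ℝ (Fin 2))) (h : ℝ → ℝ) (θ₀ θ₁ : ℝ)
    (hne : K.Nonempty) (hcomp : IsCompact K) (hconv : Convex ℝ K)
    (hsupp : ∀ θ : ℝ, IsGreatest ((fun x => (inner ℝ x (u θ) : ℝ)) '' K) (h θ))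
    (hwidth : ∀ θ : ℝ, h θ + h (θ + π) = 1)
    (hθ₀ : 0 ≤ θ₀) (hθ₁ : θ₁ ≤ 2 * π)
    (hpos : ∀ᵐ θ : ℝ, θ ∈ Set.Ioo θ₀ θ₁ → 0 < deriv (deriv h) θ + h θ) :
    Set.InjOn (fun θ : ℝ => h θ • u θ + deriv h θ • u' θ) (Set.Ioo θ₀ θ₁) := by
  have key : ∀ a b : ℝ, a ∈ Set.Ioo θ₀ θ₁ → b ∈ Set.Ioo θ₀ θ₁ → a < b →
      h a • u a + deriv h a • u' a = h b • u b + deriv h b • u' b → False := by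
    intro a b ha hb hab heq
    obtain ⟨x, hxK, hxa, hda⟩ := key_deriv hsupp hwidth a
    obtain ⟨y, hyK, hyb, hdb⟩ := key_deriv hsupp hwidth b
    have hγa : h a • u a + deriv h a • u' a = x := by
      rw [hda.deriv, ← hxa]; exact basis_expand a x
    have hγb : h b • u b + deriv h b • u' b = y := by
      rw [hdb.deriv, ← hyb]; exact basis_expand b y
    have hxy : x = y := by rw [← hγa, heq, hγb]
    have hxb : (inner ℝ x (u b) : ℝ) = h b := by rw [hxy]; exact hyb
    rcases lt_trichotomy (b - a) π with hlt | heqπ | hgt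
    · -- short arc
      have hEq := arc_eq hsupp hxK hab hlt hxa hxb
      exact agree_false hpos hab (Set.Ioo_subset_Ioo ha.1.le hb.2.le)
        (fun θ hθ => hEq θ (Set.Ioo_subset_Icc_self hθ))
    · -- antipodal
      have hb' : b = a + π := by linarith
      have h1 : (inner ℝ x (u b) : ℝ) = -(inner ℝ x (u a) : ℝ) := by
        rw [hb']; exact inner_u_pi x a
      have h2 := hwidth a
      rw [← hb'] at h2
      rw [hxa, hxb] at h1
      linarith
    · -- long arc: go around
      have hba : b - a < 2*π := by
        have := ha.1; have := hb.2; linarith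
    
      have hαβ : b - 2*π < a := by linarith
      have hxα : (inner ℝ x (u (b - 2*π)) : ℝ) = h (b - 2*π) := by
        rw [inner_u_two_pi, hxb, h_periodic hsupp]
      have hEq := arc_eq hsupp hxK hαβ (by linarith) hxα hxa
      have hc : max θ₀ (b - 2*π) < a := max_lt ha.1 hαβ
      apply agree_false hpos hc (x := x)
      · intro θ hθ
        exact ⟨lt_of_le_of_lt (le_max_left _ _) hθ.1, lt_trans hθ.2 ha.2⟩
      · intro θ hθ
        exact hEq θ ⟨le_of_lt (lt_of_le_of_lt (le_max_right _ _) hθ.1), hθ.2.le⟩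
  intro a ha b hb heq
  by_contra hne
  rcases lt_trichotomy a b with hlt | heq' | hgt
  · exact key a b ha hb hlt heq
  · exact hne heq'
  · exact key b a hb ha hgt heq.symm

/-- For a convex body `K` of constant width 1 with support function `h`, the boundary
parametrization `γ(θ) = h(θ) u(θ) + h'(θ) u'(θ)` is injective on any interval
`(θ₀, θ₁) ⊆ [0, 2π]` on which `h'' + h > 0` almost everywhere. -/
theorem constant_width_parametrization_injective
    (K : Set (EuclideanSpace ℝ (Fin 2))) (h : ℝ → ℝ) (θ₀ θ₁ : ℝ)
    (hne : K.Nonempty) (hcomp : IsCompact K) (hconv : Convex ℝ K)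
    (hsupp : IsSupportFn K h)
    (hwidth : ∀ θ : ℝ, h θ + h (θ + π) = 1)
    (hθ₀ : 0 ≤ θ₀) (hθ₁ : θ₁ ≤ 2 * π)
    (hpos : ∀ᵐ θ : ℝ, θ ∈ Set.Ioo θ₀ θ₁ → 0 < deriv (deriv h) θ + h θ) :
    Set.InjOn (fun θ : ℝ => h θ • u θ + deriv h θ • u' θ) (Set.Ioo θ₀ θ₁) := by
  have hsupp' : ∀ θ : ℝ, IsGreatest ((fun x => (inner ℝ x (u θ) : ℝ)) '' K) (h θ) := hsupp
  exact main_aux K h θ₀ θ₁ hne hcomp hconv hsupp' hwidth hθ₀ hθ₁ hpos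
end Main
end
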